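/- Higher sensitivity yields stochastic dominance: let r₁ and r₂ be nonnegative integrable functions on [0, y_t] with r₁(u) ≥ r₂(u) for all u, and let F_i(y) = exp(−∫_y^{y_t} r_i(u) du) be the corresponding estimator CDFs. Then F₁(y) ≤ F₂(y) for all y ∈ [0, y_t]; consequently, for every threshold y* ∈ [0, y_t], the detection likelihood under r₁ is at least that under r₂: 1 − F₁(y*) ≥ 1 − F₂(y*), and the expected estimator under r₁ is at least that under r₂, so the bias magnitude is smaller under r₁. -/

import Mathlib

open MeasureTheory intervalIntegral

/-- Layer-cake for a probability measure with range in `[0, yt]`. -/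
lemma aux_layercake {Ω : Type*} [MeasurableSpace Ω]
    (μ : Measure Ω) [IsProbabilityMeasure μ] (yt : ℝ)
    (Y : Ω → ℝ) (hY : Integrable Y μ)
    (hrange : ∀ᵐ ω ∂μ, Y ω ∈ Set.Icc 0 yt) :
    ∫ ω, Y ω ∂μ = ∫ t in Set.Ioc 0 yt, (μ {ω | t < Y ω}).toReal := by
  have hnn : 0 ≤ᵐ[μ] Y := hrange.mono fun ω h => h.1
  rw [hY.integral_eq_integral_meas_lt hnn]
  have hzero : ∀ t : ℝ, yt < t → μ {ω | t < Y ω} = 0 := by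
    intro t hyt
    refine measure_mono_null (t := {ω | Y ω ∉ Set.Icc 0 yt}) ?_ hrange
    intro ω hω
    simp only [Set.mem_setOf_eq] at hω ⊢
    intro hmem
    exact absurd hmem.2 (not_le.mpr (hyt.trans hω))
  have h1 : ∫ t in Set.Ioi (0:ℝ), (μ {ω | t < Y ω}).toReal
      = ∫ t in Set.Ioi (0:ℝ), (Set.Ioc 0 yt).indicator
        (fun t => (μ {ω | t < Y ω}).toReal) t := by
    apply setIntegral_congr_fun measurableSet_Ioi
    intro t ht
    by_cases h : t ≤ yt
    · rw [Set.indicator_of_mem (Set.mem_Ioc.mpr ⟨ht, h⟩)]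
    · rw [Set.indicator_of_notMem (fun hm => h (Set.mem_Ioc.mp hm).2)]
      simp only [hzero t (not_le.mp h), ENNReal.toReal_zero]
  simp only [Measure.real]
  rw [h1, setIntegral_indicator measurableSet_Ioc,
    show Set.Ioi (0:ℝ) ∩ Set.Ioc 0 yt = Set.Ioc 0 yt from
      Set.inter_eq_right.mpr Set.Ioc_subset_Ioi_self]

/-- Survival function in terms of the CDF value. -/
lemma aux_surv {Ω : Type*} [MeasurableSpace Ω]
    (μ : Measure Ω) [IsProbabilityMeasure μ]
    (Y : Ω → ℝ) (hmeas : Measurable Y) (t : ℝ) :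
    (μ {ω | t < Y ω}).toReal = 1 - (μ {ω | Y ω ≤ t}).toReal := by
  have hs : MeasurableSet {ω | Y ω ≤ t} := hmeas measurableSet_Iic
  have hc : {ω | t < Y ω} = {ω | Y ω ≤ t}ᶜ := by
    ext ω; simp [not_le]
  rw [hc, measure_compl hs (measure_ne_top μ _), measure_univ,
    ENNReal.toReal_sub_of_le prob_le_one ENNReal.one_ne_top,
    ENNReal.toReal_one]

/-- The survival function is antitone. -/
lemma aux_anti {Ω : Type*} [MeasurableSpace Ω]
    (μ : Measure Ω) [IsProbabilityMeasure μ] (Y : Ω → ℝ) :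
    Antitone (fun t : ℝ => (μ {ω | t < Y ω}).toReal) := by
  intro t s hts
  exact ENNReal.toReal_mono (measure_ne_top μ _)
    (measure_mono fun ω hω => lt_of_le_of_lt hts hω)

/-- higher sensitivity yields stochastic dominance: if the
nonnegative integrable sensitivity rates satisfy `r₁ ≥ r₂` pointwise on `[0, yt]`,
then the corresponding estimator CDFs satisfy `F₁ ≤ F₂` pointwise on `[0, yt]`;
consequently for every threshold `ystar ∈ [0, yt]` the detection likelihood under
`r₁` is at least that under `r₂` (`1 - F₂ ystar ≤ 1 - F₁ ystar`), and the expected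
estimator under `r₁` is at least that under `r₂` (`E[Y₂] ≤ E[Y₁]`), so the bias
magnitude is smaller under `r₁` (`yt - E[Y₁] ≤ yt - E[Y₂]`). -/
theorem sensitivity_stochastic_dominance {Ω : Type*} [MeasurableSpace Ω]
    (μ : Measure Ω) [IsProbabilityMeasure μ]
    (yt : ℝ) (hyt : 0 < yt)
    (r₁ r₂ : ℝ → ℝ)
    (hr₁ : ∀ u ∈ Set.Icc 0 yt, 0 ≤ r₁ u)
    (hr₂ : ∀ u ∈ Set.Icc 0 yt, 0 ≤ r₂ u)
    (hord : ∀ u ∈ Set.Icc 0 yt, r₂ u ≤ r₁ u)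
    (hint₁ : IntervalIntegrable r₁ MeasureTheory.volume 0 yt)
    (hint₂ : IntervalIntegrable r₂ MeasureTheory.volume 0 yt)
    (F₁ F₂ : ℝ → ℝ)
    (hF₁ : ∀ y ∈ Set.Icc 0 yt, F₁ y = Real.exp (-∫ u in y..yt, r₁ u))
    (hF₂ : ∀ y ∈ Set.Icc 0 yt, F₂ y = Real.exp (-∫ u in y..yt, r₂ u))
    (Y₁ Y₂ : Ω → ℝ)
    (hmeas₁ : Measurable Y₁) (hmeas₂ : Measurable Y₂)
    (hY₁ : Integrable Y₁ μ) (hY₂ : Integrable Y₂ μ)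
    (hrange₁ : ∀ᵐ ω ∂μ, Y₁ ω ∈ Set.Icc 0 yt)
    (hrange₂ : ∀ᵐ ω ∂μ, Y₂ ω ∈ Set.Icc 0 yt)
    (hcdf₁ : ∀ y ∈ Set.Icc 0 yt, (μ {ω | Y₁ ω ≤ y}).toReal = F₁ y)
    (hcdf₂ : ∀ y ∈ Set.Icc 0 yt, (μ {ω | Y₂ ω ≤ y}).toReal = F₂ y) :
    (∀ y ∈ Set.Icc 0 yt, F₁ y ≤ F₂ y) ∧
    (∀ ystar ∈ Set.Icc 0 yt, 1 - F₂ ystar ≤ 1 - F₁ ystar) ∧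
    (∫ ω, Y₂ ω ∂μ) ≤ (∫ ω, Y₁ ω ∂μ) ∧
    yt - (∫ ω, Y₁ ω ∂μ) ≤ yt - (∫ ω, Y₂ ω ∂μ) := by
  -- Part 1: CDF dominance
  have hsub : ∀ y ∈ Set.Icc (0:ℝ) yt, Set.uIcc y yt ⊆ Set.uIcc 0 yt := by
    intro y hy
    rw [Set.uIcc_of_le hy.2, Set.uIcc_of_le hyt.le]
    exact Set.Icc_subset_Icc hy.1 le_rfl
  have part1 : ∀ y ∈ Set.Icc (0:ℝ) yt, F₁ y ≤ F₂ y := by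
    intro y hy
    rw [hF₁ y hy, hF₂ y hy, Real.exp_le_exp, neg_le_neg_iff]
    refine intervalIntegral.integral_mono_on hy.2
      (hint₂.mono_set (hsub y hy)) (hint₁.mono_set (hsub y hy)) ?_
    intro u hu
    exact hord u (Set.Icc_subset_Icc hy.1 le_rfl hu)
  -- Part 3: expectations
  have hE : (∫ ω, Y₂ ω ∂μ) ≤ (∫ ω, Y₁ ω ∂μ) := by
    rw [aux_layercake μ yt Y₁ hY₁ hrange₁, aux_layercake μ yt Y₂ hY₂ hrange₂]
    have hi : ∀ Y : Ω → ℝ, IntegrableOn (fun t : ℝ => (μ {ω | t < Y ω}).toReal)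
        (Set.Ioc 0 yt) volume := by
      intro Y
      exact (intervalIntegrable_iff_integrableOn_Ioc_of_le hyt.le).mp
        ((aux_anti μ Y).intervalIntegrable)
    refine setIntegral_mono_on (hi Y₂) (hi Y₁) measurableSet_Ioc ?_
    intro t ht
    have htI : t ∈ Set.Icc (0:ℝ) yt := ⟨ht.1.le, ht.2⟩
    rw [aux_surv μ Y₁ hmeas₁ t, aux_surv μ Y₂ hmeas₂ t,
      hcdf₁ t htI, hcdf₂ t htI]
    linarith [part1 t htI]
  exact ⟨part1, fun ystar hy => by linarith [part1 ystar hy], hE, by linarith⟩
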